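/- arXiv:2407.18099 — 5 statements merged into one kernel-verified Lean document; each statement's English description precedes it below -/
import Mathlib

section
/- Let n, m be positive integers and let A, C, Q, V be continuous matrix-valued functions on [0,∞) with A(t) ∈ ℝ^{n×n}, C(t) ∈ ℝ^{m×n}, Q(t) ∈ ℝ^{m×m} positive semidefinite, and V(t) ∈ ℝ^{n×n} symmetric with V(t) ≥ v_m I_n for some constant v_m > 0 and all t ≥ 0. Let P : [0,∞) → ℝ^{n×n} be differentiable, symmetric-valued, satisfying the continuous Riccati equation Ṗ(t) = A(t)P(t) + P(t)A(t)ᵀ − P(t)C(t)ᵀQ(t)C(t)P(t) + V(t), and suppose there exist constants 0 < p_m < p_M < ∞ with p_m I_n ≤ P(t) ≤ p_M I_n for all t ≥ 0. Define the gain K(t) := P(t)C(t)ᵀQ(t) and let x̃ : [0,∞) → ℝⁿ be differentiable with x̃'(t) = (A(t) − K(t)C(t)) x̃(t). Then, with λ := v_m p_m /(2 p_M²) and α := (p_M/p_m)^{1/2}, one has ‖x̃(t)‖ ≤ α e^{−λt} ‖x̃(0)‖ for all t ≥ 0; in particular the equilibrium x̃ = 0 is globally exponentially stable. -/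
open Matrix

noncomputable section

/-- Euclidean norm of a vector. -/
def euclidEnorm {α : Type*} [Fintype α] (x : α → ℝ) : ℝ :=
  Real.sqrt (∑ a, x a ^ 2)

lemma hasDerivWithinAt_mul_of_cont {f g : ℝ → ℝ} {g' : ℝ} {s : Set ℝ} {t : ℝ}
    (hf : ContinuousWithinAt f s t) (hg : HasDerivWithinAt g g' s t) (hg0 : g t = 0) :
    HasDerivWithinAt (fun u => f u * g u) (f t * g') s t := by
  rw [hasDerivWithinAt_iff_tendsto_slope] at hg ⊢
  have heq : ∀ u : ℝ, slope (fun u => f u * g u) t u = f u * slope g t u := by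
    intro u
    simp only [slope_def_field, hg0, mul_zero, sub_zero]
    ring
  have hf' : Filter.Tendsto f (nhdsWithin t (s \ {t})) (nhds (f t)) :=
    hf.mono Set.diff_subset
  exact Filter.Tendsto.congr (fun u => (heq u).symm) (hf'.mul hg)

lemma hasDerivWithinAt_matrix_inv {n : ℕ} {P : ℝ → Matrix (Fin n) (Fin n) ℝ}
    {P' : Matrix (Fin n) (Fin n) ℝ} {s : Set ℝ} {t₀ : ℝ} (ht₀ : t₀ ∈ s)
    (hP : ∀ i j, HasDerivWithinAt (fun u => P u i j) (P' i j) s t₀)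
    (hinv : ∀ u ∈ s, P u * (P u)⁻¹ = 1 ∧ (P u)⁻¹ * P u = 1)
    (hcont : ∀ i j, ContinuousWithinAt (fun u => (P u)⁻¹ i j) s t₀)
    (i j : Fin n) :
    HasDerivWithinAt (fun u => (P u)⁻¹ i j)
      ((-((P t₀)⁻¹ * P' * (P t₀)⁻¹)) i j) s t₀ := by
  set F : ℝ → Matrix (Fin n) (Fin n) ℝ := fun u => (P u)⁻¹ with hF
  have key : ∀ u ∈ s, F u i j
      = F t₀ i j + ∑ k, ∑ l, F u i k * ((P t₀ k l - P u k l) * F t₀ l j) := by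
    intro u hu
    have h1 : F u * (P t₀ - P u) * F t₀ = F u - F t₀ := by
      have e1 : F u * P u = 1 := (hinv u hu).2
      have e2 : P t₀ * F t₀ = 1 := (hinv t₀ ht₀).1
      calc F u * (P t₀ - P u) * F t₀
          = F u * (P t₀ * F t₀) - (F u * P u) * F t₀ := by noncomm_ring
        _ = F u - F t₀ := by rw [e1, e2, mul_one, one_mul]
    have h2 : F u = F t₀ + F u * (P t₀ - P u) * F t₀ := by rw [h1]; noncomm_ring
    have h3 := congrArg (fun M => M i j) h2
    simpa [Matrix.add_apply, Matrix.mul_apply, Matrix.sub_apply, Finset.mul_sum,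
      Finset.sum_mul, mul_assoc] using h3
  have hG : HasDerivWithinAt
      (fun u => F t₀ i j + ∑ k, ∑ l, F u i k * ((P t₀ k l - P u k l) * F t₀ l j))
      (∑ k, ∑ l, F t₀ i k * ((-(P' k l)) * F t₀ l j)) s t₀ := by
    apply HasDerivWithinAt.const_add
    apply HasDerivWithinAt.fun_sum
    intro k _
    apply HasDerivWithinAt.fun_sum
    intro l _
    refine hasDerivWithinAt_mul_of_cont (hcont i k) ?_ (by simp)
    exact (((hP k l).const_sub _).mul_const _)
  have hval : (-((P t₀)⁻¹ * P' * (P t₀)⁻¹)) i j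
      = ∑ k, ∑ l, F t₀ i k * ((-(P' k l)) * F t₀ l j) := by
    simp only [Matrix.mul_apply, Matrix.neg_apply, Finset.sum_mul, Finset.mul_sum, mul_assoc,
      neg_mul, mul_neg, Finset.sum_neg_distrib, neg_inj]
    rfl
  rw [hval]
  exact hG.congr (fun u hu => key u hu) (key t₀ ht₀)

lemma hasDerivWithinAt_quadForm {n : ℕ} {M : ℝ → Matrix (Fin n) (Fin n) ℝ}
    {M' : Matrix (Fin n) (Fin n) ℝ} {x : ℝ → Fin n → ℝ} {x' : Fin n → ℝ} {s : Set ℝ} {t : ℝ}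
    (hM : ∀ i j, HasDerivWithinAt (fun u => M u i j) (M' i j) s t)
    (hx : ∀ i, HasDerivWithinAt (fun u => x u i) (x' i) s t) :
    HasDerivWithinAt (fun u => x u ⬝ᵥ (M u *ᵥ x u))
      (x' ⬝ᵥ (M t *ᵥ x t) + x t ⬝ᵥ (M' *ᵥ x t) + x t ⬝ᵥ (M t *ᵥ x')) s t := by
  have h : HasDerivWithinAt (fun u => ∑ i, ∑ j, x u i * (M u i j * x u j))
      (∑ i, ∑ j, (x' i * (M t i j * x t j) + x t i * (M' i j * x t j)
        + x t i * (M t i j * x' j))) s t := by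
    apply HasDerivWithinAt.fun_sum
    intro i _
    apply HasDerivWithinAt.fun_sum
    intro j _
    have h1 := (hx i).fun_mul ((hM i j).fun_mul (hx j))
    exact h1.congr_deriv (by ring)
  convert h using 1
  · funext u
    simp [dotProduct, Matrix.mulVec, Finset.mul_sum]
  · simp [dotProduct, Matrix.mulVec, Finset.mul_sum, Finset.sum_add_distrib]

lemma quad_nonneg {n : ℕ} {M : Matrix (Fin n) (Fin n) ℝ} (hM : M.PosSemidef) (x : Fin n → ℝ) :
    0 ≤ x ⬝ᵥ (M *ᵥ x) := by simpa using hM.dotProduct_mulVec_nonneg x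

lemma psd_conj {n : ℕ} {M : Matrix (Fin n) (Fin n) ℝ} (hM : M.PosSemidef)
    {B : Matrix (Fin n) (Fin n) ℝ} (hB : Bᵀ = B) : (B * M * B).PosSemidef := by
  have h := hM.conjTranspose_mul_mul_same B
  rwa [Matrix.conjTranspose_eq_transpose_of_trivial, hB] at h

lemma riccati_E {n m : ℕ} (A P V St : Matrix (Fin n) (Fin n) ℝ)
    (C : Matrix (Fin m) (Fin n) ℝ) (Q : Matrix (Fin m) (Fin m) ℝ)
    (hPSt : P * St = 1) (hStP : St * P = 1) (hPsym : Pᵀ = P) (hQsym : Qᵀ = Q) :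
    (A - P * Cᵀ * Q * C)ᵀ * St - St * (A * P + P * Aᵀ - P * Cᵀ * Q * C * P + V) * St
      + St * (A - P * Cᵀ * Q * C)
      = -(St * V * St) - Cᵀ * Q * C := by
  have h1 : (A - P * Cᵀ * Q * C)ᵀ = Aᵀ - Cᵀ * Q * C * P := by
    simp [Matrix.transpose_sub, Matrix.transpose_mul, Matrix.transpose_transpose, hPsym, hQsym,
      Matrix.mul_assoc]
  rw [h1]
  have e : St * (P * (Aᵀ * St)) = Aᵀ * St := by
    rw [← Matrix.mul_assoc St P, hStP, Matrix.one_mul]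
  simp only [e, Matrix.sub_mul, Matrix.mul_sub, Matrix.add_mul, Matrix.mul_add, Matrix.mul_assoc,
    hPSt, hStP, Matrix.mul_one, Matrix.one_mul]
  abel

/-- global exponential stability of the Riccati-observer error
dynamics `x̃' = (A - KC)x̃` with gain `K = PCᵀQ`, where `P` solves the CRE and is
uniformly bounded above and below. -/
theorem riccati_observer_GES
    (n m : ℕ) (hn : 0 < n) (hm : 0 < m)
    (A : ℝ → Matrix (Fin n) (Fin n) ℝ)
    (C : ℝ → Matrix (Fin m) (Fin n) ℝ)
    (Q : ℝ → Matrix (Fin m) (Fin m) ℝ)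
    (V : ℝ → Matrix (Fin n) (Fin n) ℝ)
    (hA : ∀ i j, ContinuousOn (fun t => A t i j) (Set.Ici 0))
    (hC : ∀ i j, ContinuousOn (fun t => C t i j) (Set.Ici 0))
    (hQcont : ∀ i j, ContinuousOn (fun t => Q t i j) (Set.Ici 0))
    (hVcont : ∀ i j, ContinuousOn (fun t => V t i j) (Set.Ici 0))
    (hQ : ∀ t ≥ (0:ℝ), (Q t).PosSemidef)
    (vm : ℝ) (hvm : 0 < vm)
    (hVsym : ∀ t ≥ (0:ℝ), (V t)ᵀ = V t)
    (hV : ∀ t ≥ (0:ℝ), (V t - vm • (1 : Matrix (Fin n) (Fin n) ℝ)).PosSemidef)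
    (P : ℝ → Matrix (Fin n) (Fin n) ℝ)
    (hPsym : ∀ t ≥ (0:ℝ), (P t)ᵀ = P t)
    (hPdyn : ∀ t ≥ (0:ℝ), ∀ i j, HasDerivWithinAt (fun s => P s i j)
      ((A t * P t + P t * (A t)ᵀ - P t * (C t)ᵀ * Q t * C t * P t + V t) i j)
      (Set.Ici 0) t)
    (pm pM : ℝ) (hpm : 0 < pm) (hpmM : pm < pM)
    (hPlow : ∀ t ≥ (0:ℝ), (P t - pm • (1 : Matrix (Fin n) (Fin n) ℝ)).PosSemidef)
    (hPhigh : ∀ t ≥ (0:ℝ), (pM • (1 : Matrix (Fin n) (Fin n) ℝ) - P t).PosSemidef)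
    (K : ℝ → Matrix (Fin n) (Fin m) ℝ)
    (hK : ∀ t, K t = P t * (C t)ᵀ * Q t)
    (xt : ℝ → Fin n → ℝ)
    (hxt : ∀ t ≥ (0:ℝ), ∀ i, HasDerivWithinAt (fun s => xt s i)
      (((A t - K t * C t) *ᵥ xt t) i) (Set.Ici 0) t) :
    ∀ t ≥ (0:ℝ),
      euclidEnorm (xt t) ≤ Real.sqrt (pM / pm) *
        Real.exp (-(vm * pm / (2 * pM ^ 2)) * t) * euclidEnorm (xt 0) := by
  have hpM : 0 < pM := hpm.trans hpmM
  -- positive definiteness of P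
  have hsmul_pd : ∀ c : ℝ, 0 < c → (c • (1 : Matrix (Fin n) (Fin n) ℝ)).PosDef := by
    intro c hc
    have h : (c • (1 : Matrix (Fin n) (Fin n) ℝ)) = Matrix.diagonal (fun _ => c) := by
      ext i j
      simp [Matrix.one_apply, Matrix.diagonal_apply, mul_ite]
    rw [h]
    exact Matrix.PosDef.diagonal fun _ => hc
  have hPpd : ∀ t ∈ Set.Ici (0:ℝ), (P t).PosDef := by
    intro t ht
    have h := Matrix.PosDef.posSemidef_add (hPlow t ht) (hsmul_pd pm hpm)
    rwa [sub_add_cancel] at h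
  have hPdet : ∀ t ∈ Set.Ici (0:ℝ), IsUnit (P t).det :=
    fun t ht => ((hPpd t ht).det_pos).ne'.isUnit
  set S : ℝ → Matrix (Fin n) (Fin n) ℝ := fun u => (P u)⁻¹ with hSdef
  have hPS : ∀ t ∈ Set.Ici (0:ℝ), P t * S t = 1 :=
    fun t ht => Matrix.mul_nonsing_inv _ (hPdet t ht)
  have hSP : ∀ t ∈ Set.Ici (0:ℝ), S t * P t = 1 :=
    fun t ht => Matrix.nonsing_inv_mul _ (hPdet t ht)
  have hSpd : ∀ t ∈ Set.Ici (0:ℝ), (S t).PosDef := fun t ht => (hPpd t ht).inv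
  have hSsym : ∀ t ∈ Set.Ici (0:ℝ), (S t)ᵀ = S t := by
    intro t ht
    rw [← Matrix.conjTranspose_eq_transpose_of_trivial]
    exact (hSpd t ht).1.eq
  -- continuity of P and S
  have hPmat : ∀ t ∈ Set.Ici (0:ℝ), ContinuousWithinAt P (Set.Ici 0) t := by
    intro t ht
    refine continuousWithinAt_pi.2 (fun i => ?_)
    rw [continuousWithinAt_pi]; intro j
    exact (hPdyn t ht i j).continuousWithinAt
  have hScont : ∀ t ∈ Set.Ici (0:ℝ), ∀ i j,
      ContinuousWithinAt (fun u => S u i j) (Set.Ici 0) t := by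
    intro t ht i j
    have hdet : ContinuousAt Ring.inverse ((P t).det) := by
      have h := NormedRing.inverse_continuousAt (hPdet t ht).unit
      rwa [IsUnit.unit_spec] at h
    have h1 : ContinuousAt Inv.inv (P t) := continuousAt_matrix_inv (P t) hdet
    have h2 : ContinuousWithinAt (fun u => (P u)⁻¹) (Set.Ici 0) t :=
      h1.comp_continuousWithinAt (hPmat t ht)
    exact (((continuous_apply j).comp (continuous_apply i)).continuousAt).comp_continuousWithinAt h2
  -- derivative of S
  set Pd : ℝ → Matrix (Fin n) (Fin n) ℝ :=
    fun t => A t * P t + P t * (A t)ᵀ - P t * (C t)ᵀ * Q t * C t * P t + V t with hPddef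
  have hSderiv : ∀ t ∈ Set.Ici (0:ℝ), ∀ i j, HasDerivWithinAt (fun u => S u i j)
      ((-(S t * Pd t * S t)) i j) (Set.Ici 0) t := by
    intro t ht i j
    exact hasDerivWithinAt_matrix_inv ht (hPdyn t ht)
      (fun u hu => ⟨hPS u hu, hSP u hu⟩) (hScont t ht) i j
  -- the Lyapunov function and its derivative
  set g : ℝ → ℝ := fun u => xt u ⬝ᵥ (S u *ᵥ xt u) with hgdef
  set Dex : ℝ → ℝ := fun t =>
    (((A t - K t * C t) *ᵥ xt t) ⬝ᵥ (S t *ᵥ xt t)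
      + xt t ⬝ᵥ ((-(S t * Pd t * S t)) *ᵥ xt t)
      + xt t ⬝ᵥ (S t *ᵥ ((A t - K t * C t) *ᵥ xt t))) with hDexdef
  have hgd : ∀ t ∈ Set.Ici (0:ℝ), HasDerivWithinAt g (Dex t) (Set.Ici 0) t :=
    fun t ht => hasDerivWithinAt_quadForm (hSderiv t ht) (hxt t ht)
  set c : ℝ := vm / pM with hc
  have hcpos : 0 < c := div_pos hvm hpM
  have hgnonneg : ∀ t ∈ Set.Ici (0:ℝ), 0 ≤ g t :=
    fun t ht => quad_nonneg (hSpd t ht).posSemidef (xt t)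
  -- derivative bound
  have hDle : ∀ t ∈ Set.Ici (0:ℝ), Dex t ≤ -c * g t := by
    intro t ht
    have hQsym : (Q t)ᵀ = Q t := by
      rw [← Matrix.conjTranspose_eq_transpose_of_trivial]
      exact (hQ t ht).1.eq
    set N : Matrix (Fin n) (Fin n) ℝ := A t - K t * C t with hN
    have e1 : xt t ⬝ᵥ ((Nᵀ * S t) *ᵥ xt t) = (N *ᵥ xt t) ⬝ᵥ (S t *ᵥ xt t) := by
      rw [← Matrix.mulVec_mulVec, dotProduct_mulVec, Matrix.vecMul_transpose]
    have e3 : xt t ⬝ᵥ ((S t * N) *ᵥ xt t) = xt t ⬝ᵥ (S t *ᵥ (N *ᵥ xt t)) := by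
      rw [Matrix.mulVec_mulVec]
    have hsum : Dex t = xt t ⬝ᵥ ((Nᵀ * S t - S t * Pd t * S t + S t * N) *ᵥ xt t) := by
      simp only [hDexdef]
      rw [← hN]
      simp only [Matrix.add_mulVec, Matrix.sub_mulVec, Matrix.neg_mulVec, dotProduct_add,
        dotProduct_sub, dotProduct_neg, e1, e3]
      ring
    have hKC : K t * C t = P t * (C t)ᵀ * Q t * C t := by rw [hK]
    have hEeq : Nᵀ * S t - S t * Pd t * S t + S t * N
        = -(S t * V t * S t) - (C t)ᵀ * Q t * C t := by
      rw [hN, hKC, hPddef]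
      exact riccati_E (A t) (P t) (V t) (S t) (C t) (Q t) (hPS t ht) (hSP t ht)
        (hPsym t ht) hQsym
    rw [hsum, hEeq]
    have h1 : 0 ≤ xt t ⬝ᵥ (((C t)ᵀ * Q t * C t) *ᵥ xt t) := by
      have hpsd := (hQ t ht).conjTranspose_mul_mul_same (C t)
      rw [Matrix.conjTranspose_eq_transpose_of_trivial] at hpsd
      exact quad_nonneg hpsd (xt t)
    have h2 : vm * (xt t ⬝ᵥ ((S t * S t) *ᵥ xt t)) ≤ xt t ⬝ᵥ ((S t * V t * S t) *ᵥ xt t) := by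
      have hpsd := psd_conj (hV t ht) (hSsym t ht)
      have hid : S t * (V t - vm • 1) * S t = S t * V t * S t - vm • (S t * S t) := by
        simp [Matrix.mul_sub, Matrix.sub_mul, mul_smul_comm, smul_mul_assoc]
      rw [hid] at hpsd
      have h := quad_nonneg hpsd (xt t)
      simp only [Matrix.sub_mulVec, Matrix.smul_mulVec, dotProduct_sub, dotProduct_smul,
        smul_eq_mul] at h
      linarith
    have h3 : g t ≤ pM * (xt t ⬝ᵥ ((S t * S t) *ᵥ xt t)) := by
      have hpsd := psd_conj (hPhigh t ht) (hSsym t ht)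
      have hid : S t * (pM • 1 - P t) * S t = pM • (S t * S t) - S t := by
        simp [Matrix.mul_sub, Matrix.sub_mul, mul_smul_comm, smul_mul_assoc, hSP t ht]
      rw [hid] at hpsd
      have h := quad_nonneg hpsd (xt t)
      simp only [Matrix.sub_mulVec, Matrix.smul_mulVec, dotProduct_sub, dotProduct_smul,
        smul_eq_mul] at h
      rw [hgdef]
      linarith
    have hsplit : xt t ⬝ᵥ ((-(S t * V t * S t) - (C t)ᵀ * Q t * C t) *ᵥ xt t)
        = -(xt t ⬝ᵥ ((S t * V t * S t) *ᵥ xt t))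
          - xt t ⬝ᵥ (((C t)ᵀ * Q t * C t) *ᵥ xt t) := by
      simp [Matrix.sub_mulVec, Matrix.neg_mulVec, dotProduct_sub, dotProduct_neg]
    rw [hsplit]
    have h4 : c * g t ≤ vm * (xt t ⬝ᵥ ((S t * S t) *ᵥ xt t)) := by
      rw [hc, div_mul_eq_mul_div, div_le_iff₀ hpM]
      nlinarith [h3, hvm.le]
    linarith
  -- Gronwall via antitonicity
  set u : ℝ → ℝ := fun t => Real.exp (c * t) * g t with hudef
  have hgcont : ContinuousOn g (Set.Ici 0) := fun t ht => (hgd t ht).continuousWithinAt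
  have hucont : ContinuousOn u (Set.Ici 0) := by
    apply ContinuousOn.mul _ hgcont
    exact (Real.continuous_exp.comp (continuous_const.mul continuous_id)).continuousOn
  have huderivat : ∀ t : ℝ, 0 < t →
      HasDerivAt u (Real.exp (c * t) * c * g t + Real.exp (c * t) * Dex t) t := by
    intro t ht
    have hgt : HasDerivAt g (Dex t) t := (hgd t ht.le).hasDerivAt (Ici_mem_nhds ht)
    have hexp : HasDerivAt (fun t => Real.exp (c * t)) (Real.exp (c * t) * c) t := by
      simpa using ((hasDerivAt_id t).const_mul c).exp
    exact hexp.mul hgt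
  have hanti : AntitoneOn u (Set.Ici 0) := by
    apply antitoneOn_of_deriv_nonpos (convex_Ici 0) hucont
    · intro t ht
      rw [interior_Ici] at ht
      exact (huderivat t ht).differentiableAt.differentiableWithinAt
    · intro t ht
      rw [interior_Ici] at ht
      rw [(huderivat t ht).deriv]
      have hD := hDle t (Set.Ioi_subset_Ici_self ht)
      have hg0 := hgnonneg t (Set.Ioi_subset_Ici_self ht)
      have h5 : Real.exp (c * t) * Dex t ≤ Real.exp (c * t) * (-c * g t) :=
        mul_le_mul_of_nonneg_left hD (Real.exp_pos _).le
      nlinarith [h5]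
  have hg_decay : ∀ t ≥ (0:ℝ), g t ≤ Real.exp (-(c * t)) * g 0 := by
    intro t ht
    have h := hanti Set.self_mem_Ici ht ht
    rw [hudef] at h
    simp only [mul_zero, Real.exp_zero, one_mul] at h
    rw [Real.exp_neg, inv_mul_eq_div, le_div_iff₀ (Real.exp_pos _)]
    linarith [h]
  -- upper/lower quadratic bounds via sqrt of S
  have hRbounds : ∀ t ∈ Set.Ici (0:ℝ),
      xt t ⬝ᵥ xt t ≤ pM * g t ∧ pm * g t ≤ xt t ⬝ᵥ xt t := by
    intro t ht
    set R : Matrix (Fin n) (Fin n) ℝ := open scoped MatrixOrder in CFC.sqrt (S t) with hR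
    have hRR : R * R = S t := by
      open scoped MatrixOrder in exact CFC.sqrt_mul_sqrt_self (S t) (hSpd t ht).posSemidef.nonneg
    have hRsym : Rᵀ = R := by
      rw [← Matrix.conjTranspose_eq_transpose_of_trivial]
      open scoped MatrixOrder in exact (Matrix.nonneg_iff_posSemidef.mp (CFC.sqrt_nonneg (S t))).1.eq
    have hRRP : R * (R * P t) = 1 := by
      rw [← Matrix.mul_assoc, hRR, hSP t ht]
    have hRPR : R * P t * R = 1 := by
      have := mul_eq_one_comm.mp hRRP
      rwa [Matrix.mul_assoc] at this ⊢
    constructor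
    · have hpsd := psd_conj (hPhigh t ht) hRsym
      have hid : R * (pM • 1 - P t) * R = pM • S t - 1 := by
        simp [Matrix.mul_sub, Matrix.sub_mul, mul_smul_comm, smul_mul_assoc, hRR, hRPR]
      rw [hid] at hpsd
      have h := quad_nonneg hpsd (xt t)
      simp only [Matrix.sub_mulVec, Matrix.smul_mulVec, Matrix.one_mulVec, dotProduct_sub,
        dotProduct_smul, smul_eq_mul] at h
      rw [hgdef]
      linarith
    · have hpsd := psd_conj (hPlow t ht) hRsym
      have hid : R * (P t - pm • 1) * R = 1 - pm • S t := by
        simp [Matrix.mul_sub, Matrix.sub_mul, mul_smul_comm, smul_mul_assoc, hRR, hRPR]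
      rw [hid] at hpsd
      have h := quad_nonneg hpsd (xt t)
      simp only [Matrix.sub_mulVec, Matrix.smul_mulVec, Matrix.one_mulVec, dotProduct_sub,
        dotProduct_smul, smul_eq_mul] at h
      rw [hgdef]
      linarith
  -- final computation
  intro t ht
  have hsq : ∀ y : Fin n → ℝ, euclidEnorm y = Real.sqrt (y ⬝ᵥ y) := by
    intro y
    rw [euclidEnorm]
    congr 1
    simp [dotProduct, pow_two]
  rw [hsq, hsq]
  have e0 : (0:ℝ) ≤ Real.exp (-(c * t)) := (Real.exp_pos _).le
  have hchain : xt t ⬝ᵥ xt t ≤ pM / pm * Real.exp (-(c * t)) * (xt 0 ⬝ᵥ xt 0) := by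
    have hb1 := (hRbounds t ht).1
    have hb2 := (hRbounds 0 Set.self_mem_Ici).2
    have hg0d : g 0 ≤ (xt 0 ⬝ᵥ xt 0) / pm := by
      rw [le_div_iff₀ hpm]
      linarith
    have h6 : pM * g t ≤ pM * (Real.exp (-(c * t)) * g 0) :=
      mul_le_mul_of_nonneg_left (hg_decay t ht) hpM.le
    have h7 : pM * (Real.exp (-(c * t)) * g 0)
        ≤ pM * (Real.exp (-(c * t)) * ((xt 0 ⬝ᵥ xt 0) / pm)) := by
      apply mul_le_mul_of_nonneg_left _ hpM.le
      exact mul_le_mul_of_nonneg_left hg0d e0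
    have h8 : pM * (Real.exp (-(c * t)) * ((xt 0 ⬝ᵥ xt 0) / pm))
        = pM / pm * Real.exp (-(c * t)) * (xt 0 ⬝ᵥ xt 0) := by ring
    linarith
  calc Real.sqrt (xt t ⬝ᵥ xt t)
      ≤ Real.sqrt (pM / pm * Real.exp (-(c * t)) * (xt 0 ⬝ᵥ xt 0)) := Real.sqrt_le_sqrt hchain
    _ = Real.sqrt (pM / pm) * Real.exp (-(c * t) / 2) * Real.sqrt (xt 0 ⬝ᵥ xt 0) := by
        rw [Real.sqrt_mul (by positivity), Real.sqrt_mul (by positivity)]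
        have hee : Real.exp (-(c * t)) = Real.exp (-(c * t) / 2) * Real.exp (-(c * t) / 2) := by
          rw [← Real.exp_add]; ring_nf
        rw [hee, Real.sqrt_mul_self (Real.exp_pos _).le]
    _ ≤ Real.sqrt (pM / pm) * Real.exp (-(vm * pm / (2 * pM ^ 2)) * t)
          * Real.sqrt (xt 0 ⬝ᵥ xt 0) := by
        have hle : -(c * t) / 2 ≤ -(vm * pm / (2 * pM ^ 2)) * t := by
          have key : vm * pm / (2 * pM ^ 2) ≤ vm / pM / 2 := by
            rw [div_div, div_le_div_iff₀ (by positivity) (by positivity)]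
            nlinarith [mul_nonneg (mul_nonneg hvm.le hpM.le) (sub_nonneg.mpr hpmM.le)]
          rw [hc]
          have h9 := mul_le_mul_of_nonneg_right key ht
          linarith
        have := Real.exp_le_exp.mpr hle
        gcongr <;> positivity
end
end

section
/- Let N ≥ 1 and define Γ := [I₃;…;I₃] ∈ ℝ^{3N×3} (N stacked copies of I₃), Ā := [[0_{3N×3N}, −Γ, 0_{3N×3}],[0_{3×3N}, 0_{3×3}, I₃],[0_{3×3N}, 0_{3×3}, 0_{3×3}]] ∈ ℝ^{(3N+6)×(3N+6)}, and C̄ := [I_{3N}, 0_{3N×3}, 0_{3N×3}] ∈ ℝ^{3N×(3N+6)}. Define the stacked matrix 𝒪_c := [C̄; C̄Ā; C̄Ā²] ∈ ℝ^{9N×(3N+6)}. Then 𝒪_cᵀ 𝒪_c ≥ I_{3N+6} in the positive semidefinite order; in particular 𝒪_c has full column rank 3N+6. -/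
open Matrix

noncomputable section

/-- Index type for `ℝ^{3N+6}`: `N` blocks of size 3 (landmarks), plus two blocks
of size 3 (velocity and gravity). -/
abbrev StateIdx (N : ℕ) := (Fin N × Fin 3) ⊕ (Fin 3 ⊕ Fin 3)

/-- Index type for `ℝ^{3N}`: `N` blocks of size 3. -/
abbrev OutIdx (N : ℕ) := Fin N × Fin 3

/-- `Γ = [I₃; …; I₃]` (`N` stacked copies of `I₃`). -/
def Gam (N : ℕ) : Matrix (Fin N × Fin 3) (Fin 3) ℝ :=
  fun p b => if p.2 = b then 1 else 0

/-- `Ā = [[0, -Γ, 0], [0, 0, I₃], [0, 0, 0]] ∈ ℝ^{(3N+6)×(3N+6)}`. -/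
def Abar (N : ℕ) : Matrix (StateIdx N) (StateIdx N) ℝ :=
  Matrix.fromBlocks 0
    (fun p q => Sum.elim (fun b => -(Gam N p b)) (fun _ => (0:ℝ)) q)
    0
    (Matrix.fromBlocks 0 1 0 0)

/-- `C̄ = [I_{3N}, 0, 0] ∈ ℝ^{3N×(3N+6)}`. -/
def Cbar (N : ℕ) : Matrix (OutIdx N) (StateIdx N) ℝ :=
  fun p q => Sum.elim (fun q' => if p = q' then (1:ℝ) else 0) (fun _ => 0) q

/-- The stacked observability-type matrix `𝒪_c = [C̄; C̄Ā; C̄Ā²] ∈ ℝ^{9N×(3N+6)}`. -/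
def Oc (N : ℕ) : Matrix (OutIdx N ⊕ (OutIdx N ⊕ OutIdx N)) (StateIdx N) ℝ :=
  fun r q => Sum.elim
    (fun p => Cbar N p q)
    (Sum.elim (fun p => (Cbar N * Abar N) p q) (fun p => ((Cbar N * Abar N ^ 2 : Matrix (OutIdx N) (StateIdx N) ℝ)) p q)) r

lemma CA_apply (N : ℕ) (p : OutIdx N) (q : StateIdx N) :
    (Cbar N * Abar N) p q = Sum.elim (fun _ => (0:ℝ)) (Sum.elim (fun b => -(Gam N p b)) (fun _ => 0)) q := by
  simp [Matrix.mul_apply, Cbar, Abar, Fintype.sum_sum_type]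
  cases q with
  | inl q => simp [Matrix.fromBlocks]
  | inr q =>
    cases q with
    | inl b => simp [Matrix.fromBlocks, Finset.sum_ite_eq]
    | inr b => simp [Matrix.fromBlocks]

lemma CA2_apply (N : ℕ) (p : OutIdx N) (q : StateIdx N) :
    ((Cbar N * Abar N ^ 2 : Matrix (OutIdx N) (StateIdx N) ℝ)) p q = Sum.elim (fun _ => (0:ℝ)) (Sum.elim (fun _ => 0) (fun b => -(Gam N p b))) q := by
  rw [pow_two, ← Matrix.mul_assoc]
  rw [Matrix.mul_apply]
  simp only [CA_apply]
  cases q with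
  | inl q => simp [Abar, Fintype.sum_sum_type, Matrix.fromBlocks]
  | inr q =>
    cases q with
    | inl b => simp [Abar, Fintype.sum_sum_type, Matrix.fromBlocks]
    | inr b =>
      simp [Abar, Fintype.sum_sum_type, Matrix.fromBlocks, Matrix.one_apply, Gam]

lemma Cbar_apply (N : ℕ) (p : OutIdx N) (q : StateIdx N) :
    Cbar N p q = Sum.elim (fun q' => if p = q' then (1:ℝ) else 0) (fun _ => 0) q := rfl

lemma key (N : ℕ) : (Oc N)ᵀ * Oc N =
    Matrix.diagonal (Sum.elim (fun _ => (1:ℝ)) (fun _ => (N:ℝ))) := by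
  ext i j
  rw [Matrix.mul_apply]
  simp only [Oc, Matrix.transpose_apply, Fintype.sum_sum_type, Sum.elim_inl, Sum.elim_inr,
    CA_apply, CA2_apply, Cbar_apply]
  cases i with
  | inl i =>
    cases j with
    | inl j =>
      simp [Matrix.diagonal, Fintype.sum_prod_type, Finset.sum_ite_eq, Prod.ext_iff,
        ite_and, eq_comm]
    | inr j => cases j with
      | inl j => simp [Matrix.diagonal]
      | inr j => simp [Matrix.diagonal]
  | inr i =>
    cases i with
    | inl i =>
      cases j with
      | inl j => simp [Matrix.diagonal]
      | inr j => cases j with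
        | inl j =>
          simp [Matrix.diagonal, Gam, Fintype.sum_prod_type, Finset.sum_ite_eq, ite_and, eq_comm]
          split_ifs with h <;> simp
        | inr j => simp [Matrix.diagonal]
    | inr i =>
      cases j with
      | inl j => simp [Matrix.diagonal]
      | inr j => cases j with
        | inl j => simp [Matrix.diagonal]
        | inr j =>
          simp [Matrix.diagonal, Gam, Fintype.sum_prod_type, Finset.sum_ite_eq, ite_and, eq_comm]
          split_ifs with h <;> simp

/-- `𝒪_cᵀ𝒪_c ≥ I_{3N+6}`; in particular `𝒪_c` has full column
rank `3N+6`. -/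
theorem Oc_full_column_rank
    (N : ℕ) (hN : 1 ≤ N) :
    ((Oc N)ᵀ * Oc N - 1).PosSemidef ∧ (Oc N).rank = 3 * N + 6 := by
  have hkey := key N
  constructor
  · rw [hkey, ← Matrix.diagonal_one, Matrix.diagonal_sub]
    refine Matrix.posSemidef_diagonal_iff.mpr ?_
    rintro (i | i)
    · simp
    · simp only [Pi.sub_apply, Sum.elim_inr, Pi.one_apply]
      have : (1:ℝ) ≤ (N:ℝ) := by exact_mod_cast hN
      linarith
  · rw [← Matrix.rank_transpose_mul_self, hkey,
      Matrix.rank_of_isUnit _ (by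
        rw [Matrix.isUnit_iff_isUnit_det, Matrix.det_diagonal]
        simp [Fintype.prod_sum_type, isUnit_iff_ne_zero]
        positivity)]
    simp [Fintype.card_sum, Fintype.card_prod]
    ring
end
end

section
/- Let M ≥ 1, let ρ₁,…,ρ_M ∈ (0,1) with Σᵢρᵢ = 1, let ν₁,…,ν_M ∈ ℝ³ with Σᵢρᵢνᵢ = 0, and set 𝖬 := Σᵢ ρᵢ νᵢνᵢᵀ. Let R̃, R̂ ∈ SO(3), p̃ ∈ ℝ³, and ᴮp̃₁,…,ᴮp̃_M ∈ ℝ³, and define ξᵢ := R̃ᵀp̃ + (I₃ − R̃ᵀ)νᵢ + R̂ ᴮp̃ᵢ for each i. Then the attitude innovation satisfies σ_R := (1/2) Σᵢ ρᵢ νᵢ × ξᵢ = ψ(𝖬R̃) + (1/2) Σᵢ ρᵢ νᵢ^× R̂ ᴮp̃ᵢ. -/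
open Matrix

noncomputable section

/-- `SO(3)`: rotation matrices. -/
def SO3 (R : Matrix (Fin 3) (Fin 3) ℝ) : Prop :=
  R * Rᵀ = 1 ∧ Rᵀ * R = 1 ∧ R.det = 1

/-- Skew-symmetric matrix `u^×` with `u^× y = u × y`. -/
def skew (u : Fin 3 → ℝ) : Matrix (Fin 3) (Fin 3) ℝ :=
  !![0, -u 2, u 1; u 2, 0, -u 0; -u 1, u 0, 0]

/-- `ψ(A) = (1/2)(a₃₂ - a₂₃, a₁₃ - a₃₁, a₂₁ - a₁₂)ᵀ`. -/
def psiMap (A : Matrix (Fin 3) (Fin 3) ℝ) : Fin 3 → ℝ :=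
  ![(A 2 1 - A 1 2) / 2, (A 0 2 - A 2 0) / 2, (A 1 0 - A 0 1) / 2]

lemma skew_mulVec (u x : Fin 3 → ℝ) : skew u *ᵥ x = crossProduct u x := by
  funext j
  fin_cases j <;>
    simp [skew, crossProduct, mulVec, dotProduct, Fin.sum_univ_three] <;> ring

lemma psi_sum {n : ℕ} (A : Fin n → Matrix (Fin 3) (Fin 3) ℝ) :
    psiMap (∑ i, A i) = ∑ i, psiMap (A i) := by
  funext j
  fin_cases j <;>
    simp [psiMap, Matrix.sum_apply, Finset.sum_apply, sub_div, Finset.sum_sub_distrib,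
      Finset.sum_div]

lemma psi_cross (c : ℝ) (v : Fin 3 → ℝ) (R : Matrix (Fin 3) (Fin 3) ℝ) :
    psiMap ((c • Matrix.vecMulVec v v) * R) =
      (1/2 : ℝ) • (c • crossProduct v ((1 - Rᵀ) *ᵥ v)) := by
  funext j
  fin_cases j <;>
    simp [psiMap, crossProduct, vecMulVec, Matrix.mul_apply, mulVec, dotProduct,
      Fin.sum_univ_three, Matrix.one_apply, Matrix.sub_apply, Matrix.transpose_apply] <;> ring

/-- decomposition of the attitude innovation term `σ_R`. -/
theorem attitude_innovation_decomposition
    (M : ℕ) (hM : 1 ≤ M)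
    (ρ : Fin M → ℝ) (hρ : ∀ i, ρ i ∈ Set.Ioo (0 : ℝ) 1)
    (hρsum : ∑ i, ρ i = 1)
    (ν : Fin M → Fin 3 → ℝ) (hν : ∑ i, ρ i • ν i = 0)
    (Mmat : Matrix (Fin 3) (Fin 3) ℝ) (hMmat : Mmat = ∑ i, ρ i • Matrix.vecMulVec (ν i) (ν i))
    (Rtil Rhat : Matrix (Fin 3) (Fin 3) ℝ) (hRtil : SO3 Rtil) (hRhat : SO3 Rhat)
    (ptil : Fin 3 → ℝ) (Bptil : Fin M → Fin 3 → ℝ)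
    (ξ : Fin M → Fin 3 → ℝ)
    (hξ : ∀ i, ξ i = Rtilᵀ *ᵥ ptil + (1 - Rtilᵀ) *ᵥ ν i + Rhat *ᵥ Bptil i) :
    (1/2 : ℝ) • ∑ i, ρ i • (crossProduct (ν i) (ξ i)) =
      psiMap (Mmat * Rtil) + (1/2 : ℝ) • ∑ i, ρ i • (skew (ν i) *ᵥ (Rhat *ᵥ Bptil i)) := by
  have hcross : ∀ i, crossProduct (ν i) (ξ i)
      = crossProduct (ν i) (Rtilᵀ *ᵥ ptil)
        + crossProduct (ν i) ((1 - Rtilᵀ) *ᵥ ν i)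
        + crossProduct (ν i) (Rhat *ᵥ Bptil i) := by
    intro i; rw [hξ i]; simp [map_add]
  have h1 : ∑ i, ρ i • crossProduct (ν i) (Rtilᵀ *ᵥ ptil) = 0 := by
    have h : ∑ i, ρ i • crossProduct (ν i) (Rtilᵀ *ᵥ ptil)
        = crossProduct (∑ i, ρ i • ν i) (Rtilᵀ *ᵥ ptil) := by
      simp [map_sum, LinearMap.sum_apply, _root_.map_smul, LinearMap.smul_apply]
    rw [h, hν]; simp
  have h2 : psiMap (Mmat * Rtil)
      = (1/2 : ℝ) • ∑ i, ρ i • crossProduct (ν i) ((1 - Rtilᵀ) *ᵥ ν i) := by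
    rw [hMmat, Finset.sum_mul, psi_sum, Finset.smul_sum]
    exact Finset.sum_congr rfl fun i _ => psi_cross (ρ i) (ν i) Rtil
  calc (1/2 : ℝ) • ∑ i, ρ i • (crossProduct (ν i) (ξ i))
      = (1/2 : ℝ) • (∑ i, ρ i • crossProduct (ν i) (Rtilᵀ *ᵥ ptil)
          + ∑ i, ρ i • crossProduct (ν i) ((1 - Rtilᵀ) *ᵥ ν i)
          + ∑ i, ρ i • crossProduct (ν i) (Rhat *ᵥ Bptil i)) := by
        rw [← Finset.sum_add_distrib, ← Finset.sum_add_distrib]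
        congr 1
        exact Finset.sum_congr rfl fun i _ => by rw [hcross i, smul_add, smul_add]
    _ = psiMap (Mmat * Rtil)
          + (1/2 : ℝ) • ∑ i, ρ i • (skew (ν i) *ᵥ (Rhat *ᵥ Bptil i)) := by
        rw [h1, h2]
        simp only [zero_add, smul_add]
        congr 1
        congr 1
        exact Finset.sum_congr rfl fun i _ => by rw [skew_mulVec]
end
end

section
/- Let 𝖬 ∈ ℝ^{3×3} be symmetric, k_R, k_p > 0, and let R̃ : ℝ → SO(3) and p̃ : ℝ → ℝ³ be differentiable with R̃'(t) = R̃(t)(−k_R ψ(𝖬R̃(t)))^× and p̃'(t) = −k_p p̃(t) (the zero-input error dynamics). Then the Lyapunov function V(t) := tr(𝖬(I₃ − R̃(t))) + (1/2)‖p̃(t)‖² is differentiable with V'(t) = −2k_R ‖ψ(𝖬R̃(t))‖² − k_p ‖p̃(t)‖² ≤ 0 for all t. -/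
open Matrix

noncomputable section

set_option maxHeartbeats 1000000 in
/-- the Lyapunov function `V = tr(𝖬(I₃ - R̃)) + ‖p̃‖²/2` is
nonincreasing along the zero-input pose error dynamics. -/
theorem lyapunov_decrease_zero_input
    (Mmat : Matrix (Fin 3) (Fin 3) ℝ) (hMsym : Mmatᵀ = Mmat)
    (kR kp : ℝ) (hkR : 0 < kR) (hkp : 0 < kp)
    (Rtil : ℝ → Matrix (Fin 3) (Fin 3) ℝ) (hRSO : ∀ t, SO3 (Rtil t))
    (ptil : ℝ → Fin 3 → ℝ)
    (hRdyn : ∀ t, ∀ i j, HasDerivAt (fun s => Rtil s i j)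
      ((Rtil t * skew (-(kR • psiMap (Mmat * Rtil t)))) i j) t)
    (hpdyn : ∀ t, ∀ i, HasDerivAt (fun s => ptil s i) (-(kp * ptil t i)) t) :
    ∀ t, HasDerivAt (fun s => Matrix.trace (Mmat * (1 - Rtil s)) + (1/2) * ∑ i, (ptil s i) ^ 2)
        (-(2 * kR) * ∑ i, (psiMap (Mmat * Rtil t) i) ^ 2 - kp * ∑ i, (ptil t i) ^ 2) t ∧
      (-(2 * kR) * ∑ i, (psiMap (Mmat * Rtil t) i) ^ 2 - kp * ∑ i, (ptil t i) ^ 2) ≤ 0 := by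
  intro t
  constructor
  · have hfun : (fun s => Matrix.trace (Mmat * (1 - Rtil s)) + (1/2) * ∑ i, (ptil s i) ^ 2)
        = fun s => (Matrix.trace Mmat - ∑ i : Fin 3, ∑ j : Fin 3, Mmat i j * Rtil s j i)
            + (1/2) * ∑ i, (ptil s i) ^ 2 := by
      funext s
      congr 1
      rw [Matrix.mul_sub, Matrix.mul_one, Matrix.trace_sub]
      simp [Matrix.trace, Matrix.mul_apply, Matrix.diag]
    rw [hfun]
    have h1 : HasDerivAt
        (fun s => Matrix.trace Mmat - ∑ i : Fin 3, ∑ j : Fin 3, Mmat i j * Rtil s j i)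
        (-(∑ i : Fin 3, ∑ j : Fin 3,
            Mmat i j * (Rtil t * skew (-(kR • psiMap (Mmat * Rtil t)))) j i)) t := by
      apply HasDerivAt.const_sub
      apply HasDerivAt.fun_sum
      intro i _
      apply HasDerivAt.fun_sum
      intro j _
      exact (hRdyn t j i).const_mul _
    have h2 : HasDerivAt (fun s => (1/2 : ℝ) * ∑ i, (ptil s i) ^ 2)
        (∑ i : Fin 3, ptil t i * -(kp * ptil t i)) t := by
      have : HasDerivAt (fun s => ∑ i : Fin 3, (ptil s i) ^ 2)
          (∑ i : Fin 3, 2 * ptil t i * -(kp * ptil t i)) t := by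
        apply HasDerivAt.fun_sum
        intro i _
        have := (hpdyn t i).fun_pow 2
        simpa [mul_comm, mul_assoc, mul_left_comm] using this
      have := this.const_mul (1/2 : ℝ)
      refine this.congr_deriv ?_
      rw [Finset.mul_sum]
      congr 1; funext i; ring
    have := h1.add h2
    refine this.congr_deriv ?_
    simp only [Fin.sum_univ_three, Matrix.mul_apply, skew, psiMap]
    norm_num [Matrix.cons_val_zero, Matrix.cons_val_one, Matrix.head_cons,
      Matrix.cons_val_two, Matrix.tail_cons, Pi.smul_apply, Pi.neg_apply, smul_eq_mul]
    ring
  · have h1 : (0:ℝ) ≤ ∑ i, (psiMap (Mmat * Rtil t) i) ^ 2 :=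
      Finset.sum_nonneg fun i _ => sq_nonneg _
    have h2 : (0:ℝ) ≤ ∑ i, (ptil t i) ^ 2 :=
      Finset.sum_nonneg fun i _ => sq_nonneg _
    nlinarith
end
end

section
/- Let 𝖬 ∈ ℝ^{3×3} be symmetric with 𝖬̄ := (1/2)(tr(𝖬)I₃ − 𝖬) positive definite and smallest eigenvalue λ_m > 0, and let k_R, k_p > 0. Let R̃ : ℝ → SO(3), p̃ : ℝ → ℝ³, and d₁, d₂ : ℝ → ℝ³ be such that R̃ and p̃ are differentiable with R̃'(t) = R̃(t)(−k_R ψ(𝖬R̃(t)) + d₁(t))^× and p̃'(t) = −k_p p̃(t) + d₂(t). Define W(t) := (1/4)tr(I₃ − R̃(t)) + ‖p̃(t)‖² and α := min{k_R λ_m, k_p}. Then W is differentiable and satisfies, for all t, the differential inequality W'(t) ≤ −α W(t) + 2 k_R λ_m + ‖d₁(t)‖²/(4 k_R λ_m) + ‖d₂(t)‖²/k_p. -/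
open Matrix

noncomputable section

/-- Euclidean norm of a vector. -/
def vecEnorm {α : Type*} [Fintype α] (x : α → ℝ) : ℝ :=
  Real.sqrt (∑ a, x a ^ 2)

lemma psi_nonneg (M R Mb : Matrix (Fin 3) (Fin 3) ℝ) (hM : Mᵀ = M)
    (h1 : R * Rᵀ = 1) (h2 : Rᵀ * R = 1)
    (hMb : Mb = (1/2 : ℝ) • (Matrix.trace M • (1 : Matrix (Fin 3) (Fin 3) ℝ) - M))
    (hPD : Mb.PosDef) :
    0 ≤ (R 2 1 - R 1 2)/2 * psiMap (M * R) 0 + (R 0 2 - R 2 0)/2 * psiMap (M * R) 1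
      + (R 1 0 - R 0 1)/2 * psiMap (M * R) 2 := by
  have hq : (0:ℝ) ≤ psiMap R ⬝ᵥ (Mb *ᵥ psiMap R) := by simpa using hPD.posSemidef.dotProduct_mulVec_nonneg (psiMap R)
  have hident : (R 2 1 - R 1 2)/2 * psiMap (M * R) 0 + (R 0 2 - R 2 0)/2 * psiMap (M * R) 1
      + (R 1 0 - R 0 1)/2 * psiMap (M * R) 2 = psiMap R ⬝ᵥ (Mb *ᵥ psiMap R) := by
    subst hMb
    have g00 := congrFun (congrFun h1 0) 0
    have g01 := congrFun (congrFun h1 0) 1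
    have g02 := congrFun (congrFun h1 0) 2
    have g11 := congrFun (congrFun h1 1) 1
    have g12 := congrFun (congrFun h1 1) 2
    have g22 := congrFun (congrFun h1 2) 2
    have k00 := congrFun (congrFun h2 0) 0
    have k01 := congrFun (congrFun h2 0) 1
    have k02 := congrFun (congrFun h2 0) 2
    have k11 := congrFun (congrFun h2 1) 1
    have k12 := congrFun (congrFun h2 1) 2
    have k22 := congrFun (congrFun h2 2) 2
    have s10 : M 0 1 = M 1 0 := congrFun (congrFun hM 1) 0
    have s20 : M 0 2 = M 2 0 := congrFun (congrFun hM 2) 0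
    have s21 : M 1 2 = M 2 1 := congrFun (congrFun hM 2) 1
    simp only [Matrix.mul_apply, Matrix.transpose_apply, Matrix.one_apply, Fin.sum_univ_three,
      Fin.isValue, if_true, if_false, ne_eq, zero_ne_one, one_ne_zero, reduceIte,
      Fin.reduceEq] at g00 g01 g02 g11 g12 g22 k00 k01 k02 k11 k12 k22
    simp only [psiMap, dotProduct, Matrix.mulVec, Matrix.smul_apply, Matrix.sub_apply,
      Matrix.one_apply, Matrix.trace, Matrix.diag, Fin.sum_univ_three, Matrix.mul_apply,
      smul_eq_mul, Matrix.cons_val_zero, Matrix.cons_val_one, Matrix.head_cons, Fin.isValue,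
      Matrix.cons_val_two, Matrix.tail_cons, reduceIte, Fin.reduceEq]
    linear_combination (M 0 0 - M 2 2)/8 * g00 - (M 0 0 - M 2 2)/8 * k00
      + (M 0 1 + M 1 0)/8 * g01 - (M 0 1 + M 1 0)/8 * k01
      + (M 0 2)/4 * g02 - (M 0 2)/4 * k02
      + (M 1 1 - M 2 2)/8 * g11 - (M 1 1 - M 2 2)/8 * k11
      + (M 1 2)/4 * g12 - (M 1 2)/4 * k12
      + ((R 0 0 * R 0 1 - R 0 0 * R 1 0 + R 0 1 * R 1 1 + R 0 2 * R 2 1 - R 1 0 * R 1 1 - R 1 2 * R 2 0)/8) * s10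
      + ((R 0 0 * R 0 2)/4 - (R 0 0 * R 2 0)/4 + (R 0 1 * R 1 2)/8 - (R 0 1 * R 2 1)/8 + (R 1 0 * R 1 2)/8 - (R 1 0 * R 2 1)/8) * s20
      + ((R 0 1 * R 0 2)/8 - (R 0 1 * R 2 0)/8 + (R 0 2 * R 1 0)/8 - (R 1 0 * R 2 0)/8 + (R 1 1 * R 1 2)/4 - (R 1 1 * R 2 1)/4) * s21
  linarith [hq, hident]

lemma diag_bd (x a b : ℝ) (h : x * x + a * a + b * b = 1) : -1 ≤ x ∧ x ≤ 1 := by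
  constructor <;> nlinarith [sq_nonneg (x + 1), sq_nonneg (x - 1), sq_nonneg a, sq_nonneg b]

lemma psi_sq_bd (r01 r02 r10 r12 r20 r21 : ℝ) (x y z : ℝ)
    (g00 : x * x + r01 * r01 + r02 * r02 = 1)
    (g11 : r10 * r10 + y * y + r12 * r12 = 1)
    (g22 : r20 * r20 + r21 * r21 + z * z = 1) :
    ((r21 - r12)/2)^2 + ((r02 - r20)/2)^2 + ((r10 - r01)/2)^2 ≤ 3/2 := by
  nlinarith [sq_nonneg (r21 + r12), sq_nonneg (r02 + r20), sq_nonneg (r10 + r01),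
    sq_nonneg x, sq_nonneg y, sq_nonneg z]

lemma final_combine (kR lm kp al X SE P2 PF TR S2 E2 F2 : ℝ)
    (hkR : 0 < kR) (hkl : 0 < kR * lm) (hkp : 0 < kp)
    (hal1 : al ≤ kR * lm) (hal2 : al ≤ kp) (hal0 : 0 < al)
    (hX : 0 ≤ X) (hS : S2 ≤ 3/2) (h3a : TR ≤ 3) (h3b : -3 ≤ TR) (hP2 : 0 ≤ P2)
    (hy1 : (1/2) * SE ≤ kR * lm / 4 * S2 + E2 / (4 * kR * lm))
    (hy2 : 2 * PF ≤ kp * P2 + F2 / kp) :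
    -(kR/2) * X + (1/2) * SE - 2*kp*P2 + 2*PF ≤
      -al * ((1/4) * (3 - TR) + P2) + 2 * kR * lm + E2 / (4 * kR * lm) + F2 / kp := by
  have c1 : al * P2 ≤ kp * P2 := mul_le_mul_of_nonneg_right hal2 hP2
  have c2 : al * (3 - TR) ≤ 6 * (kR * lm) := by nlinarith
  have c3 : kR * lm * S2 ≤ kR * lm * (3/2) := by nlinarith
  have c4 : 0 ≤ kR / 2 * X := by positivity
  nlinarith [c1, c2, c3, c4, hy1, hy2]

set_option maxHeartbeats 2000000 in
/-- ultimate-boundedness differential inequality for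
`W = tr(I₃ - R̃)/4 + ‖p̃‖²` along the perturbed pose error dynamics. -/
theorem ultimate_boundedness_inequality
    (Mmat : Matrix (Fin 3) (Fin 3) ℝ) (hMsym : Mmatᵀ = Mmat)
    (Mbar : Matrix (Fin 3) (Fin 3) ℝ)
    (hMbar : Mbar = (1/2 : ℝ) • (Matrix.trace Mmat • (1 : Matrix (Fin 3) (Fin 3) ℝ) - Mmat))
    (hPD : Mbar.PosDef)
    (lm : ℝ) (hlm : 0 < lm)
    (hHerm : Mbar.IsHermitian)
    (hmin : ∀ i, lm ≤ hHerm.eigenvalues i) (hex : ∃ i, hHerm.eigenvalues i = lm)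
    (kR kp : ℝ) (hkR : 0 < kR) (hkp : 0 < kp)
    (Rtil : ℝ → Matrix (Fin 3) (Fin 3) ℝ) (hRSO : ∀ t, SO3 (Rtil t))
    (ptil d1 d2 : ℝ → Fin 3 → ℝ)
    (hRdyn : ∀ t, ∀ i j, HasDerivAt (fun s => Rtil s i j)
      ((Rtil t * skew (-(kR • psiMap (Mmat * Rtil t)) + d1 t)) i j) t)
    (hpdyn : ∀ t, ∀ i, HasDerivAt (fun s => ptil s i) ((-(kp • ptil t) + d2 t) i) t)
    (W : ℝ → ℝ)
    (hW : ∀ t, W t = (1/4) * Matrix.trace (1 - Rtil t) + (vecEnorm (ptil t)) ^ 2) :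
    (∀ t, DifferentiableAt ℝ W t) ∧
    ∀ t, deriv W t ≤ -(min (kR * lm) kp) * W t + 2 * kR * lm +
      (vecEnorm (d1 t)) ^ 2 / (4 * kR * lm) + (vecEnorm (d2 t)) ^ 2 / kp := by
  have hWg : ∀ s, W s = (1/4) * (3 - (Rtil s 0 0 + Rtil s 1 1 + Rtil s 2 2)) +
      (ptil s 0 ^ 2 + ptil s 1 ^ 2 + ptil s 2 ^ 2) := by
    intro s
    have h1 : vecEnorm (ptil s) ^ 2 = ptil s 0 ^ 2 + ptil s 1 ^ 2 + ptil s 2 ^ 2 := by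
      rw [vecEnorm, Real.sq_sqrt (by positivity)]; exact Fin.sum_univ_three _
    rw [hW s, h1, Matrix.trace_sub, Matrix.trace_one]
    simp [Matrix.trace, Matrix.diag, Fin.sum_univ_three]
  have hD : ∀ t, ∃ D, HasDerivAt W D t ∧ D =
      -(kR/2) * ((Rtil t 2 1 - Rtil t 1 2)/2 * psiMap (Mmat * Rtil t) 0
               + (Rtil t 0 2 - Rtil t 2 0)/2 * psiMap (Mmat * Rtil t) 1
               + (Rtil t 1 0 - Rtil t 0 1)/2 * psiMap (Mmat * Rtil t) 2)
      + (1/2) * ((Rtil t 2 1 - Rtil t 1 2)/2 * d1 t 0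
               + (Rtil t 0 2 - Rtil t 2 0)/2 * d1 t 1
               + (Rtil t 1 0 - Rtil t 0 1)/2 * d1 t 2)
      - 2*kp*(ptil t 0 ^ 2 + ptil t 1 ^ 2 + ptil t 2 ^ 2)
      + 2*(ptil t 0 * d2 t 0 + ptil t 1 * d2 t 1 + ptil t 2 * d2 t 2) := by
    intro t
    have h00 := hRdyn t 0 0
    have h11 := hRdyn t 1 1
    have h22 := hRdyn t 2 2
    have hp0 := (hpdyn t 0).pow 2
    have hp1 := (hpdyn t 1).pow 2
    have hp2 := (hpdyn t 2).pow 2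
    have hT := HasDerivAt.const_mul ((1:ℝ)/4) (((h00.add h11).add h22).const_sub 3)
    have hsum := hT.add ((hp0.add hp1).add hp2)
    refine ⟨_, hsum.congr_of_eventuallyEq (.of_forall hWg), ?_⟩
    simp only [Matrix.mul_apply, skew, Fin.sum_univ_three, Pi.add_apply, Pi.neg_apply,
      Pi.smul_apply, smul_eq_mul, Matrix.cons_val_zero, Matrix.cons_val_one, Matrix.head_cons,
      Matrix.cons_val_two, Matrix.tail_cons, Matrix.of_apply, Matrix.cons_val', Matrix.empty_val',
      Matrix.cons_val_fin_one, Matrix.head_fin_const, Fin.isValue]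
    push_cast
    ring
  refine ⟨fun t => ?_, fun t => ?_⟩
  · obtain ⟨D, hDer, -⟩ := hD t
    exact hDer.differentiableAt
  · obtain ⟨D, hDer, hDeq⟩ := hD t
    have hE1 : vecEnorm (d1 t) ^ 2 = d1 t 0 ^ 2 + d1 t 1 ^ 2 + d1 t 2 ^ 2 := by
      rw [vecEnorm, Real.sq_sqrt (by positivity)]; exact Fin.sum_univ_three _
    have hE2 : vecEnorm (d2 t) ^ 2 = d2 t 0 ^ 2 + d2 t 1 ^ 2 + d2 t 2 ^ 2 := by
      rw [vecEnorm, Real.sq_sqrt (by positivity)]; exact Fin.sum_univ_three _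
    rw [hDer.deriv, hDeq, hWg t, hE1, hE2]
    obtain ⟨hO1, hO2, -⟩ := hRSO t
    have hX : 0 ≤ (Rtil t 2 1 - Rtil t 1 2)/2 * psiMap (Mmat * Rtil t) 0
        + (Rtil t 0 2 - Rtil t 2 0)/2 * psiMap (Mmat * Rtil t) 1
        + (Rtil t 1 0 - Rtil t 0 1)/2 * psiMap (Mmat * Rtil t) 2 :=
      psi_nonneg Mmat (Rtil t) Mbar hMsym hO1 hO2 hMbar hPD
    have g00 := congrFun (congrFun hO1 0) 0
    have g11 := congrFun (congrFun hO1 1) 1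
    have g22 := congrFun (congrFun hO1 2) 2
    simp only [Matrix.mul_apply, Matrix.transpose_apply, Matrix.one_apply, Fin.sum_univ_three,
      Fin.isValue, reduceIte] at g00 g11 g22
    have hkl : 0 < kR * lm := mul_pos hkR hlm
    have hb0 := diag_bd _ _ _ g00
    have hb1 := diag_bd _ _ _ (by linarith [g11] : Rtil t 1 1 * Rtil t 1 1 + Rtil t 1 0 * Rtil t 1 0 + Rtil t 1 2 * Rtil t 1 2 = 1)
    have hb2 := diag_bd _ _ _ (by linarith [g22] : Rtil t 2 2 * Rtil t 2 2 + Rtil t 2 0 * Rtil t 2 0 + Rtil t 2 1 * Rtil t 2 1 = 1)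
    have hS : ((Rtil t 2 1 - Rtil t 1 2)/2)^2 + ((Rtil t 0 2 - Rtil t 2 0)/2)^2
        + ((Rtil t 1 0 - Rtil t 0 1)/2)^2 ≤ 3/2 :=
      psi_sq_bd _ _ _ _ _ _ _ _ _ g00 g11 g22
    have hy1 : (1/2) * ((Rtil t 2 1 - Rtil t 1 2)/2 * d1 t 0
               + (Rtil t 0 2 - Rtil t 2 0)/2 * d1 t 1
               + (Rtil t 1 0 - Rtil t 0 1)/2 * d1 t 2) ≤
        kR * lm / 4 * (((Rtil t 2 1 - Rtil t 1 2)/2)^2 + ((Rtil t 0 2 - Rtil t 2 0)/2)^2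
          + ((Rtil t 1 0 - Rtil t 0 1)/2)^2)
        + (d1 t 0 ^ 2 + d1 t 1 ^ 2 + d1 t 2 ^ 2) / (4 * kR * lm) := by
      rw [← sub_nonneg]
      have hrw : kR * lm / 4 * (((Rtil t 2 1 - Rtil t 1 2)/2)^2 + ((Rtil t 0 2 - Rtil t 2 0)/2)^2
          + ((Rtil t 1 0 - Rtil t 0 1)/2)^2)
          + (d1 t 0 ^ 2 + d1 t 1 ^ 2 + d1 t 2 ^ 2) / (4 * kR * lm)
          - (1/2) * ((Rtil t 2 1 - Rtil t 1 2)/2 * d1 t 0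
               + (Rtil t 0 2 - Rtil t 2 0)/2 * d1 t 1
               + (Rtil t 1 0 - Rtil t 0 1)/2 * d1 t 2)
        = ((kR * lm * ((Rtil t 2 1 - Rtil t 1 2)/2) - d1 t 0)^2
          + (kR * lm * ((Rtil t 0 2 - Rtil t 2 0)/2) - d1 t 1)^2
          + (kR * lm * ((Rtil t 1 0 - Rtil t 0 1)/2) - d1 t 2)^2) / (4 * kR * lm) := by
        field_simp
        ring
      rw [hrw]
      positivity
    have hy2 : 2 * (ptil t 0 * d2 t 0 + ptil t 1 * d2 t 1 + ptil t 2 * d2 t 2) ≤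
        kp * (ptil t 0 ^ 2 + ptil t 1 ^ 2 + ptil t 2 ^ 2)
        + (d2 t 0 ^ 2 + d2 t 1 ^ 2 + d2 t 2 ^ 2) / kp := by
      rw [← sub_nonneg]
      have hrw : kp * (ptil t 0 ^ 2 + ptil t 1 ^ 2 + ptil t 2 ^ 2)
          + (d2 t 0 ^ 2 + d2 t 1 ^ 2 + d2 t 2 ^ 2) / kp
          - 2 * (ptil t 0 * d2 t 0 + ptil t 1 * d2 t 1 + ptil t 2 * d2 t 2)
        = ((kp * ptil t 0 - d2 t 0)^2 + (kp * ptil t 1 - d2 t 1)^2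
          + (kp * ptil t 2 - d2 t 2)^2) / kp := by
        field_simp
        ring
      rw [hrw]
      positivity
    exact final_combine kR lm kp (min (kR * lm) kp) _ _ _ _ _ _ _ _ hkR hkl hkp
      (min_le_left _ _) (min_le_right _ _) (lt_min hkl hkp) hX hS
      (by linarith [hb0.2, hb1.2, hb2.2]) (by linarith [hb0.1, hb1.1, hb2.1])
      (by positivity) hy1 hy2
end
end
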